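/- arXiv:2407.03534 — 4 statements merged into one kernel-verified Lean document; each statement's English description precedes it below -/
import Mathlib

section
/- Let p : X → Y be a submetry between metric spaces with X proper (every closed ball compact). If some fiber p⁻¹(y₀) is compact, then every fiber p⁻¹(y) is compact. -/
/-- A submetry maps closed balls onto closed balls of the same radius. -/
def IsSubmetry {X Y : Type*} [MetricSpace X] [MetricSpace Y] (p : X → Y) : Prop :=
  ∀ x : X, ∀ r : ℝ, 0 ≤ r → p '' Metric.closedBall x r = Metric.closedBall (p x) r

theorem submetry_all_fibers_compact {X Y : Type*} [MetricSpace X] [MetricSpace Y]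
    [ProperSpace X] (p : X → Y) (hsurj : Function.Surjective p) (hsub : IsSubmetry p)
    (y₀ : Y) (hcpt : IsCompact (p ⁻¹' {y₀})) :
    ∀ y : Y, IsCompact (p ⁻¹' {y}) := by
  -- p is 1-Lipschitz
  have hlip : LipschitzWith 1 p := by
    apply LipschitzWith.of_dist_le_mul
    intro a b
    have h := hsub a (dist a b) dist_nonneg
    have hb : p b ∈ Metric.closedBall (p a) (dist a b) := by
      rw [← h]
      exact ⟨b, Metric.mem_closedBall.2 (dist_comm b a ▸ le_rfl), rfl⟩
    simpa [dist_comm] using hb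
  intro y
  obtain ⟨x₀, hx₀⟩ := hsurj y₀
  obtain ⟨R, hR⟩ := (Metric.isBounded_iff_subset_closedBall x₀).1 hcpt.isBounded
  have hsubset : p ⁻¹' {y} ⊆ Metric.closedBall x₀ (dist y₀ y + R) := by
    intro x hx
    have hxy : p x = y := hx
    -- lift y₀ to a point near x
    have hmem : y₀ ∈ Metric.closedBall (p x) (dist y₀ y) := by
      rw [Metric.mem_closedBall, hxy, dist_comm]
    rw [← hsub x (dist y₀ y) dist_nonneg] at hmem
    obtain ⟨x', hx', hpx'⟩ := hmem
    have hx'K : x' ∈ p ⁻¹' {y₀} := hpx'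
    have h1 : dist x' x₀ ≤ R := hR hx'K
    have h2 : dist x x' ≤ dist y₀ y := by
      rw [dist_comm]; exact hx'
    calc dist x x₀ ≤ dist x x' + dist x' x₀ := dist_triangle _ _ _
      _ ≤ dist y₀ y + R := add_le_add h2 h1
  exact (isCompact_closedBall x₀ _).of_isClosed_subset
    (isClosed_singleton.preimage hlip.continuous) hsubset
end

section
/- Let p : X → Y be a submetry between metric spaces with X proper. Then the following are equivalent: (1) p is a proper map (preimages of compact sets are compact); (2) every fiber of p is compact; (3) some fiber of p is compact. -/
theorem submetry_proper_tfae {X Y : Type*} [MetricSpace X] [MetricSpace Y]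
    [ProperSpace X] [Nonempty Y]
    (p : X → Y) (hsurj : Function.Surjective p) (hsub : IsSubmetry p) :
    List.TFAE [
      ∀ K : Set Y, IsCompact K → IsCompact (p ⁻¹' K),
      ∀ y : Y, IsCompact (p ⁻¹' {y}),
      ∃ y : Y, IsCompact (p ⁻¹' {y})] := by
  have hlip : LipschitzWith 1 p := by
    apply LipschitzWith.of_dist_le_mul
    intro x x'
    have h := hsub x (dist x x') dist_nonneg
    have hx' : p x' ∈ p '' Metric.closedBall x (dist x x') :=
      ⟨x', Metric.mem_closedBall.2 (by rw [dist_comm]), rfl⟩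
    rw [h] at hx'
    simpa [dist_comm] using Metric.mem_closedBall.1 hx'
  tfae_have 1 → 2 := fun h y => h {y} isCompact_singleton
  tfae_have 2 → 3 := fun h => ⟨Classical.arbitrary Y, h _⟩
  tfae_have 3 → 1 := by
    rintro ⟨y₀, hy₀⟩ K hK
    have hclosed : IsClosed (p ⁻¹' K) := hK.isClosed.preimage hlip.continuous
    obtain ⟨R, hR⟩ := hK.isBounded.subset_closedBall y₀
    obtain ⟨x₀, hx₀⟩ := hsurj y₀
    obtain ⟨C, hC⟩ := hy₀.isBounded.subset_closedBall x₀
    have hsubset : p ⁻¹' K ⊆ Metric.closedBall x₀ (R + C) := by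
      intro x hx
      have hdy : dist (p x) y₀ ≤ R := Metric.mem_closedBall.1 (hR hx)
      have h := hsub x (dist (p x) y₀) dist_nonneg
      have hy₀mem : y₀ ∈ Metric.closedBall (p x) (dist (p x) y₀) :=
        Metric.mem_closedBall.2 (by rw [dist_comm])
      rw [← h] at hy₀mem
      obtain ⟨x', hx'ball, hx'p⟩ := hy₀mem
      have hx'fib : x' ∈ p ⁻¹' {y₀} := hx'p
      have hdx' : dist x' x₀ ≤ C := Metric.mem_closedBall.1 (hC hx'fib)
      have : dist x x₀ ≤ dist x x' + dist x' x₀ := dist_triangle _ _ _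
      have hxx' : dist x x' ≤ R := by
        rw [dist_comm]
        exact le_trans (Metric.mem_closedBall.1 hx'ball) hdy
      exact Metric.mem_closedBall.2 (by linarith)
    exact (isCompact_closedBall x₀ (R + C)).of_isClosed_subset hclosed hsubset
  tfae_finish
end

section
/- Let p : X → Y be a submetry and let x₁, x₂ ∈ X be 'near' points, i.e., d(x₁, x₂) = d(p(x₁), p(x₂)). Then any shortest path (geodesic) γ from x₁ to x₂ in X is mapped by p onto a shortest path from p(x₁) to p(x₂) in Y, and p restricted to the image of γ is an isometry onto its image. -/
theorem submetry_horizontal_geodesic {X Y : Type*} [MetricSpace X] [MetricSpace Y]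
    (p : X → Y) (hsurj : Function.Surjective p) (hsub : IsSubmetry p)
    (x₁ x₂ : X) (hnear : dist x₁ x₂ = dist (p x₁) (p x₂))
    (γ : ℝ → X) (hγ0 : γ 0 = x₁) (hγ1 : γ (dist x₁ x₂) = x₂)
    (hgeo : ∀ s ∈ Set.Icc (0 : ℝ) (dist x₁ x₂), ∀ t ∈ Set.Icc (0 : ℝ) (dist x₁ x₂),
      dist (γ s) (γ t) = |s - t|) :
    ∀ s ∈ Set.Icc (0 : ℝ) (dist x₁ x₂), ∀ t ∈ Set.Icc (0 : ℝ) (dist x₁ x₂),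
      dist (p (γ s)) (p (γ t)) = |s - t| := by
  -- p is 1-Lipschitz
  have lip : ∀ a b : X, dist (p a) (p b) ≤ dist a b := by
    intro a b
    have hmem : b ∈ Metric.closedBall a (dist a b) := by
      simp [Metric.mem_closedBall, dist_comm]
    have : p b ∈ Metric.closedBall (p a) (dist a b) := by
      rw [← hsub a (dist a b) dist_nonneg]
      exact ⟨b, hmem, rfl⟩
    simpa [Metric.mem_closedBall, dist_comm] using this
  set d := dist x₁ x₂ with hd
  have key : ∀ s ∈ Set.Icc (0 : ℝ) d, ∀ t ∈ Set.Icc (0 : ℝ) d, s ≤ t →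
      dist (p (γ s)) (p (γ t)) = t - s := by
    intro s hs t ht hst
    have h0 : (0 : ℝ) ∈ Set.Icc (0 : ℝ) d := ⟨le_refl _, hs.1.trans hst |>.trans ht.2⟩
    have hdmem : d ∈ Set.Icc (0 : ℝ) d := ⟨h0.2, le_refl _⟩
    have hub : dist (p (γ s)) (p (γ t)) ≤ t - s := by
      have := lip (γ s) (γ t)
      rw [hgeo s hs t ht, abs_sub_comm, abs_of_nonneg (by linarith)] at this
      exact this
    have h1 : dist (p x₁) (p (γ s)) ≤ s := by
      have := lip (γ 0) (γ s)
      rw [hgeo 0 h0 s hs, abs_sub_comm, abs_of_nonneg (by linarith [hs.1]), hγ0] at this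
      linarith
    have h2 : dist (p (γ t)) (p x₂) ≤ d - t := by
      have := lip (γ t) (γ d)
      rw [hgeo t ht d hdmem, abs_of_nonpos (by linarith [ht.2]), hγ1] at this
      linarith
    have htri : dist (p x₁) (p x₂) ≤ dist (p x₁) (p (γ s)) +
        dist (p (γ s)) (p (γ t)) + dist (p (γ t)) (p x₂) :=
      dist_triangle4 _ _ _ _
    rw [← hnear] at htri
    linarith
  intro s hs t ht
  rcases le_total s t with h | h
  · rw [key s hs t ht h, abs_sub_comm, abs_of_nonneg (by linarith)]
  · rw [dist_comm, key t ht s hs h, abs_of_nonneg (by linarith)]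
end

section
/- Let p : X → Y be a surjective submetry between metric spaces. Suppose that for a geodesic α : [0, b] → Y (unit-speed, minimizing) and for every x ∈ p⁻¹(α(0)) there is a unique geodesic lift α̃ₓ : [0, b] → X with α̃ₓ(0) = x and p ∘ α̃ₓ = α. Define the holonomy map h_α : p⁻¹(α(0)) → p⁻¹(α(b)) by h_α(x) = α̃ₓ(b). If moreover X is proper, then h_α is continuous. -/
/-- `γ` is a (unit-speed, minimizing) geodesic on `[0, b]`. -/
def IsGeodesicOn {X : Type*} [MetricSpace X] (γ : ℝ → X) (b : ℝ) : Prop :=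
  ∀ s ∈ Set.Icc (0 : ℝ) b, ∀ t ∈ Set.Icc (0 : ℝ) b, dist (γ s) (γ t) = |s - t|

/-- `γ̃` is a geodesic lift of `γ` through `p` starting at `x`. -/
def IsGeodesicLift {X Y : Type*} [MetricSpace X] [MetricSpace Y]
    (p : X → Y) (α : ℝ → Y) (b : ℝ) (x : X) (γ : ℝ → X) : Prop :=
  γ 0 = x ∧ IsGeodesicOn γ b ∧ ∀ t ∈ Set.Icc (0 : ℝ) b, p (γ t) = α t

/-- A submetry is 1-Lipschitz. -/
lemma IsSubmetry.dist_le {X Y : Type*} [MetricSpace X] [MetricSpace Y] {p : X → Y}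
    (hsub : IsSubmetry p) (a c : X) : dist (p a) (p c) ≤ dist a c := by
  have hc : p c ∈ p '' Metric.closedBall a (dist a c) :=
    ⟨c, by simp [Metric.mem_closedBall, dist_comm], rfl⟩
  rw [hsub a (dist a c) dist_nonneg] at hc
  rw [dist_comm]
  exact hc

lemma IsSubmetry.continuous {X Y : Type*} [MetricSpace X] [MetricSpace Y] {p : X → Y}
    (hsub : IsSubmetry p) : Continuous p :=
  (LipschitzWith.of_dist_le' (K := 1) (fun a c => by
    simpa using hsub.dist_le a c)).continuous

theorem holonomy_continuous {X Y : Type*} [MetricSpace X] [MetricSpace Y]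
    [ProperSpace X]
    (p : X → Y) (hsurj : Function.Surjective p) (hsub : IsSubmetry p)
    (α : ℝ → Y) (b : ℝ) (hb : 0 ≤ b) (hα : IsGeodesicOn α b)
    (hlift : ∀ x : X, p x = α 0 → ∃! γ : ℝ → X,
      (IsGeodesicLift p α b x γ ∧ ∀ t, t ∉ Set.Icc (0 : ℝ) b → γ t = γ (max 0 (min t b))))
    (h : X → X)
    (hh : ∀ x : X, ∀ hx : p x = α 0, ∀ γ : ℝ → X, IsGeodesicLift p α b x γ → h x = γ b) :
    ContinuousOn h (p ⁻¹' {α 0}) := by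
  classical
  set S : Set X := p ⁻¹' {α 0} with hS
  -- clamp function
  set c : ℝ → ℝ := fun t => max 0 (min t b) with hc
  have hcmem : ∀ t, c t ∈ Set.Icc (0 : ℝ) b := fun t =>
    ⟨le_max_left _ _, max_le hb (min_le_right _ _)⟩
  have hceq : ∀ t ∈ Set.Icc (0 : ℝ) b, c t = t := by
    intro t ht
    simp [hc, min_eq_left ht.2, max_eq_right ht.1]
  -- the chosen lift for each point of the fiber
  have key : ∀ z : X, z ∈ S → ∃ γ : ℝ → X,
      (IsGeodesicLift p α b z γ ∧ ∀ t, t ∉ Set.Icc (0 : ℝ) b → γ t = γ (c t)) := by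
    intro z hz
    exact ⟨(hlift z hz).choose, (hlift z hz).choose_spec.1⟩
  choose Γ hΓ using key
  -- clamping for all t
  have hΓc : ∀ z hz t, Γ z hz t = Γ z hz (c t) := by
    intro z hz t
    by_cases ht : t ∈ Set.Icc (0 : ℝ) b
    · rw [hceq t ht]
    · exact (hΓ z hz).2 t ht
  intro x hx
  obtain ⟨hγlift, hγclamp⟩ := hΓ x hx
  have hhx : h x = Γ x hx b := hh x hx _ hγlift
  rw [ContinuousWithinAt, hhx]
  rw [Filter.tendsto_iff_ultrafilter]
  intro F hF
  have hFS : S ∈ F := hF (by simp [Filter.mem_inf_of_right, self_mem_nhdsWithin])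
  have hFx : (F : Filter X) ≤ nhds x := hF.trans nhdsWithin_le_nhds
  -- bound: lifts of nearby points stay in a fixed closed ball
  have hball : Metric.closedBall x 1 ∈ F := hFx (Metric.closedBall_mem_nhds x one_pos)
  set E : Set X := S ∩ Metric.closedBall x 1 with hE
  have hFE : E ∈ F := Filter.inter_mem hFS hball
  have hbound : ∀ z ∈ E, ∀ hz : z ∈ S, ∀ t : ℝ,
      Γ z hz t ∈ Metric.closedBall x (b + 1) := by
    intro z hzE hz t
    rw [hΓc z hz t]
    obtain ⟨hz0, hzgeo, _⟩ := (hΓ z hz).1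
    have h1 : dist (Γ z hz (c t)) (Γ z hz 0) = |c t - 0| :=
      hzgeo _ (hcmem t) 0 ⟨le_refl _, hb⟩
    have h2 : dist (Γ z hz (c t)) x ≤ dist (Γ z hz (c t)) (Γ z hz 0) + dist z x := by
      rw [hz0]; exact dist_triangle _ _ _
    have h3 : |c t - 0| ≤ b := by
      rw [sub_zero, abs_of_nonneg (hcmem t).1]; exact (hcmem t).2
    have h4 : dist z x ≤ 1 := hzE.2
    simp only [Metric.mem_closedBall]
    calc dist (Γ z hz (c t)) x ≤ |c t - 0| + dist z x := by rw [← h1]; exact h2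
      _ ≤ b + 1 := add_le_add h3 h4
  -- the family of functions, defined everywhere
  set G : X → ℝ → X := fun z t => if hz : z ∈ S then Γ z hz t else z with hG
  have hGeq : ∀ z (hz : z ∈ S) t, G z t = Γ z hz t := by
    intro z hz t; simp [hG, hz]
  -- pointwise ultrafilter limits
  have hK : IsCompact (Metric.closedBall x (b + 1)) := isCompact_closedBall x (b + 1)
  have hlim : ∀ t : ℝ, ∃ a, Filter.Tendsto (fun z => G z t) F (nhds a) := by
    intro t
    have hmem : ↑(F.map (fun z => G z t)) ≤ Filter.principal (Metric.closedBall x (b + 1)) := by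
      rw [Ultrafilter.coe_map, Filter.le_principal_iff, Filter.mem_map]
      filter_upwards [hFE] with z hzE
      rw [Set.mem_preimage, hGeq z hzE.1 t]
      exact hbound z hzE hzE.1 t
    obtain ⟨a, _, ha⟩ := hK.ultrafilter_le_nhds (F.map (fun z => G z t)) hmem
    exact ⟨a, ha⟩
  choose δ hδ using hlim
  -- δ is a clamped geodesic lift through x
  have hδ0 : δ 0 = x := by
    have h1 : Filter.Tendsto (fun z => G z 0) F (nhds x) := by
      have : (fun z : X => G z 0) =ᶠ[F] id := by
        filter_upwards [hFS] with z hz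
        rw [hGeq z hz 0]
        exact ((hΓ z hz).1).1
      exact (Filter.tendsto_congr' this).mpr hFx
    exact tendsto_nhds_unique (hδ 0) h1
  have hδgeo : IsGeodesicOn δ b := by
    intro s hs t ht
    have h1 : Filter.Tendsto (fun z => dist (G z s) (G z t)) F (nhds (dist (δ s) (δ t))) :=
      (hδ s).dist (hδ t)
    have h2 : Filter.Tendsto (fun z => dist (G z s) (G z t)) F (nhds (|s - t|)) := by
      have : (fun z : X => dist (G z s) (G z t)) =ᶠ[F] fun _ => |s - t| := by
        filter_upwards [hFS] with z hz
        rw [hGeq z hz s, hGeq z hz t]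
        exact ((hΓ z hz).1).2.1 s hs t ht
      exact (Filter.tendsto_congr' this).mpr tendsto_const_nhds
    exact tendsto_nhds_unique h1 h2
  have hδp : ∀ t ∈ Set.Icc (0 : ℝ) b, p (δ t) = α t := by
    intro t ht
    have h1 : Filter.Tendsto (fun z => p (G z t)) F (nhds (p (δ t))) :=
      (hsub.continuous.tendsto _).comp (hδ t)
    have h2 : Filter.Tendsto (fun z => p (G z t)) F (nhds (α t)) := by
      have : (fun z : X => p (G z t)) =ᶠ[F] fun _ => α t := by
        filter_upwards [hFS] with z hz
        rw [hGeq z hz t]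
        exact ((hΓ z hz).1).2.2 t ht
      exact (Filter.tendsto_congr' this).mpr tendsto_const_nhds
    exact tendsto_nhds_unique h1 h2
  have hδclamp : ∀ t, t ∉ Set.Icc (0 : ℝ) b → δ t = δ (max 0 (min t b)) := by
    intro t _
    have h1 : Filter.Tendsto (fun z => G z t) F (nhds (δ (c t))) := by
      have : (fun z : X => G z t) =ᶠ[F] fun z => G z (c t) := by
        filter_upwards [hFS] with z hz
        rw [hGeq z hz t, hGeq z hz (c t)]
        exact hΓc z hz t
      exact (Filter.tendsto_congr' this).mpr (hδ (c t))
    exact tendsto_nhds_unique (hδ t) h1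
  -- by uniqueness, δ is the chosen lift of x
  have hδeq : δ = Γ x hx := by
    have hu := (hlift x hx)
    have h1 : δ = hu.choose :=
      hu.choose_spec.2 δ ⟨⟨hδ0, hδgeo, hδp⟩, hδclamp⟩
    have h2 : Γ x hx = hu.choose :=
      hu.choose_spec.2 _ ⟨hγlift, hγclamp⟩
    rw [h1, h2]
  -- conclude
  have hhF : (fun z => h z) =ᶠ[F] fun z => G z b := by
    filter_upwards [hFS] with z hz
    rw [hGeq z hz b]
    exact hh z hz _ ((hΓ z hz).1)
  have : Filter.Tendsto h F (nhds (δ b)) :=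
    (Filter.tendsto_congr' hhF).mpr (hδ b)
  rwa [hδeq] at this
end
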